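/- For d ≥ 3, the Gaussian semigroup leaves the function |x|^{-r} supermedian for 0 ≤ r ≤ d-2: for all t > 0 and x ∈ ℝ^d, ∫_{ℝ^d} g_t(y - x) |y|^{-r} dy ≤ |x|^{-r}, where g_t(x) = (4πt)^{-d/2} e^{-|x|²/(4t)}. -/

import Mathlib

open MeasureTheory ENNReal

section Aux
variable (d : ℕ)

lemma gauss_linear (a c : ℝ) (ha : 0 < a) (w : EuclideanSpace ℝ (Fin d)) :
    ∫ v : EuclideanSpace ℝ (Fin d), Real.exp (-a * ‖v‖^2 + c * (inner ℝ w v : ℝ))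
      = (Real.pi / a) ^ ((d:ℝ)/2) * Real.exp (c^2 * ‖w‖^2 / (4*a)) := by
  have hb : 0 < ((a:ℂ)).re := by simpa using ha
  have key := GaussianFourier.integral_cexp_neg_mul_sq_norm_add
    (V := EuclideanSpace ℝ (Fin d)) hb (c:ℂ) w
  have h1 : ∀ v : EuclideanSpace ℝ (Fin d),
      Complex.exp (-(a:ℂ) * (‖v‖:ℂ)^2 + (c:ℂ) * ((inner ℝ w v : ℝ):ℂ))
      = ((Real.exp (-a * ‖v‖^2 + c * (inner ℝ w v : ℝ)) : ℝ) : ℂ) := by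
    intro v; rw [Complex.ofReal_exp]; push_cast; ring_nf
  simp_rw [h1] at key
  rw [show (∫ v : EuclideanSpace ℝ (Fin d),
        ((Real.exp (-a * ‖v‖^2 + c * (inner ℝ w v : ℝ)) : ℝ) : ℂ))
      = ((∫ v : EuclideanSpace ℝ (Fin d),
        Real.exp (-a * ‖v‖^2 + c * (inner ℝ w v : ℝ)) : ℝ) : ℂ) from integral_ofReal] at key
  rw [← Complex.ofReal_inj, key,
    show ((Module.finrank ℝ (EuclideanSpace ℝ (Fin d)):ℂ) / 2 : ℂ) = (((d:ℝ)/2 : ℝ):ℂ) by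
      push_cast [finrank_euclideanSpace_fin]; ring,
    ← Complex.ofReal_div, ← Complex.ofReal_cpow (by positivity),
    show ((c:ℂ)^2 * (‖w‖:ℂ)^2/(4*(a:ℂ))) = ((c^2*‖w‖^2/(4*a) : ℝ):ℂ) by push_cast; ring,
    ← Complex.ofReal_exp, ← Complex.ofReal_mul]

lemma gauss_int (a c : ℝ) (ha : 0 < a) (w : EuclideanSpace ℝ (Fin d)) :
    Integrable (fun v : EuclideanSpace ℝ (Fin d) =>
      Real.exp (-a * ‖v‖^2 + c * (inner ℝ w v : ℝ))) := by
  have hb : 0 < ((a:ℂ)).re := by simpa using ha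
  have key := (GaussianFourier.integrable_cexp_neg_mul_sq_norm_add
    (V := EuclideanSpace ℝ (Fin d)) hb (c:ℂ) w).re
  have h1 : ∀ v : EuclideanSpace ℝ (Fin d),
      (Complex.exp (-(a:ℂ) * (‖v‖:ℂ)^2 + (c:ℂ) * ((inner ℝ w v : ℝ):ℂ))).re
      = Real.exp (-a * ‖v‖^2 + c * (inner ℝ w v : ℝ)) := by
    intro v
    rw [show (-(a:ℂ) * (‖v‖:ℂ)^2 + (c:ℂ) * ((inner ℝ w v : ℝ):ℂ))
        = ((-a * ‖v‖^2 + c * (inner ℝ w v : ℝ) : ℝ) : ℂ) by push_cast; ring,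
      ← Complex.ofReal_exp, Complex.ofReal_re]
  exact key.congr (Filter.Eventually.of_forall fun v => h1 v)

lemma gauss_pt (t s : ℝ) (ht : 0 < t) (x y : EuclideanSpace ℝ (Fin d)) :
    (4*Real.pi*t)^(-(d:ℝ)/2) * Real.exp (-‖y - x‖^2/(4*t)) * Real.exp (-(‖y‖^2 * s))
    = ((4*Real.pi*t)^(-(d:ℝ)/2) * Real.exp (-‖x‖^2/(4*t)))
      * Real.exp (-(1/(4*t)+s) * ‖y‖^2 + (1/(2*t)) * (inner ℝ x y : ℝ)) := by
  simp only [mul_assoc, ← Real.exp_add]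
  congr 2
  rw [show ‖y - x‖^2 = ‖y‖^2 - 2*(inner ℝ y x : ℝ) + ‖x‖^2 from norm_sub_sq_real y x,
    real_inner_comm x y]
  have h4t : (4*t) ≠ 0 := by positivity
  field_simp
  ring

lemma gauss_conv_int (t s : ℝ) (ht : 0 < t) (hs : 0 ≤ s) (x : EuclideanSpace ℝ (Fin d)) :
    Integrable (fun y : EuclideanSpace ℝ (Fin d) =>
      (4*Real.pi*t)^(-(d:ℝ)/2) * Real.exp (-‖y - x‖^2/(4*t)) * Real.exp (-(‖y‖^2 * s))) := by
  simp_rw [gauss_pt d t s ht x]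
  exact (gauss_int d (1/(4*t)+s) (1/(2*t)) (by positivity) x).const_mul _

lemma gauss_conv (t s : ℝ) (ht : 0 < t) (hs : 0 ≤ s) (x : EuclideanSpace ℝ (Fin d)) :
    ∫ y : EuclideanSpace ℝ (Fin d),
      (4*Real.pi*t)^(-(d:ℝ)/2) * Real.exp (-‖y - x‖^2/(4*t)) * Real.exp (-(‖y‖^2 * s))
    = (1+4*t*s)^(-(d:ℝ)/2) * Real.exp (-(‖x‖^2 * (s/(1+4*t*s)))) := by
  set a : ℝ := 1/(4*t) + s with ha_def
  have ha : 0 < a := by positivity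
  have hK : 0 < 1 + 4*t*s := by positivity
  simp_rw [gauss_pt d t s ht x]
  rw [integral_const_mul, gauss_linear d a (1/(2*t)) ha x]
  have hπa : Real.pi / a = (4*Real.pi*t) / (1+4*t*s) := by
    rw [ha_def]; field_simp
  rw [hπa, Real.div_rpow (by positivity) hK.le]
  have h1 : (4*Real.pi*t)^(-(d:ℝ)/2) * ((4*Real.pi*t)^((d:ℝ)/2) / (1+4*t*s)^((d:ℝ)/2))
      = (1+4*t*s)^(-(d:ℝ)/2) := by
    rw [show (-(d:ℝ)/2) = -((d:ℝ)/2) by ring, Real.rpow_neg (by positivity),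
      Real.rpow_neg hK.le]
    field_simp
  calc (4*Real.pi*t)^(-(d:ℝ)/2) * Real.exp (-‖x‖^2/(4*t)) *
        ((4*Real.pi*t)^((d:ℝ)/2) / (1+4*t*s)^((d:ℝ)/2) * Real.exp ((1/(2*t))^2 * ‖x‖^2 / (4*a)))
      = ((4*Real.pi*t)^(-(d:ℝ)/2) * ((4*Real.pi*t)^((d:ℝ)/2) / (1+4*t*s)^((d:ℝ)/2)))
        * (Real.exp (-‖x‖^2/(4*t)) * Real.exp ((1/(2*t))^2 * ‖x‖^2 / (4*a))) := by ring
    _ = (1+4*t*s)^(-(d:ℝ)/2) * Real.exp (-(‖x‖^2 * (s/(1+4*t*s)))) := by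
        rw [h1, ← Real.exp_add]
        congr 1
        rw [ha_def]
        congr 1
        field_simp
        ring

lemma conv_lintegral (t s : ℝ) (ht : 0 < t) (hs : 0 ≤ s) (x : EuclideanSpace ℝ (Fin d)) :
    ∫⁻ y : EuclideanSpace ℝ (Fin d), ENNReal.ofReal
        ((4*Real.pi*t)^(-(d:ℝ)/2) * Real.exp (-‖y - x‖^2/(4*t)) * Real.exp (-(‖y‖^2 * s)))
    = ENNReal.ofReal ((1+4*t*s)^(-(d:ℝ)/2) * Real.exp (-(‖x‖^2 * (s/(1+4*t*s))))) := by
  rw [← ofReal_integral_eq_lintegral_ofReal (gauss_conv_int d t s ht hs x)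
    (Filter.Eventually.of_forall fun y => by positivity), gauss_conv d t s ht hs x]

end Aux

lemma gamma_lint (p c : ℝ) (hp : 0 < p) (hc : 0 < c) :
    ∫⁻ s in Set.Ioi (0:ℝ), ENNReal.ofReal (s^(p-1) * Real.exp (-(c*s)))
    = ENNReal.ofReal ((1/c)^p * Real.Gamma p) := by
  have hint : IntegrableOn (fun s : ℝ => s^(p-1) * Real.exp (-(c*s))) (Set.Ioi 0) := by
    have := integrableOn_rpow_mul_exp_neg_mul_rpow (p := 1) (s := p-1) (b := c)
      (by linarith) zero_lt_one hc
    simpa [Real.rpow_one, neg_mul] using this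
  rw [← ofReal_integral_eq_lintegral_ofReal hint
    ((ae_restrict_iff' measurableSet_Ioi).mpr (Filter.Eventually.of_forall
      fun s hs => by have : (0:ℝ) < s := hs; positivity)),
    Real.integral_rpow_mul_exp_neg_mul_Ioi hp hc]

lemma lint_cov {s : Set ℝ} {f f' : ℝ → ℝ} (hs : MeasurableSet s)
    (hf' : ∀ x ∈ s, HasDerivWithinAt f (f' x) s x) (hf : Set.InjOn f s) (g : ℝ → ℝ≥0∞) :
    ∫⁻ x in f '' s, g x = ∫⁻ x in s, ENNReal.ofReal |f' x| * g (f x) := by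
  simpa only [ContinuousLinearMap.det_toSpanSingleton] using
    MeasureTheory.lintegral_image_eq_lintegral_abs_det_fderiv_mul volume hs
      (fun x hx => (hf' x hx).hasFDerivWithinAt) hf g

lemma gmap_deriv {t : ℝ} (ht : 0 < t) :
    ∀ s ∈ Set.Ioi (0:ℝ), HasDerivWithinAt (fun s : ℝ => s/(1+4*t*s))
      (1/(1+4*t*s)^2) (Set.Ioi 0) s := by
  intro s hs
  have hs' : (0:ℝ) < s := hs
  have hK : (0:ℝ) < 1+4*t*s := by positivity
  have h := (hasDerivAt_id s).div
    (((hasDerivAt_id s).const_mul (4*t)).const_add 1) hK.ne'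
  refine h.hasDerivWithinAt.congr_deriv ?_
  simp only [id]
  field_simp
  ring
lemma gmap_inj {t : ℝ} (ht : 0 < t) :
    Set.InjOn (fun s : ℝ => s/(1+4*t*s)) (Set.Ioi 0) := by
  intro a ha b hb hab
  have ha' : (0:ℝ) < a := ha
  have hb' : (0:ℝ) < b := hb
  have hKa : (0:ℝ) < 1+4*t*a := by positivity
  have hKb : (0:ℝ) < 1+4*t*b := by positivity
  simp only at hab
  rw [div_eq_div_iff hKa.ne' hKb.ne'] at hab
  nlinarith [hab]
lemma gmap_image {t : ℝ} (ht : 0 < t) :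
    (fun s : ℝ => s/(1+4*t*s)) '' (Set.Ioi 0) = Set.Ioo 0 (1/(4*t)) := by
  ext u
  simp only [Set.mem_image, Set.mem_Ioi, Set.mem_Ioo]
  constructor
  · rintro ⟨s, hs, rfl⟩
    have hK : (0:ℝ) < 1+4*t*s := by positivity
    refine ⟨by positivity, ?_⟩
    rw [div_lt_div_iff₀ hK (by positivity)]
    nlinarith
  · rintro ⟨hu1, hu2⟩
    have hm : (0:ℝ) < 1 - 4*t*u := by
      have := (lt_div_iff₀ (by positivity : (0:ℝ) < 4*t)).mp hu2
      nlinarith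
    refine ⟨u/(1-4*t*u), by positivity, ?_⟩
    have h1 : 1 + 4*t*(u/(1-4*t*u)) = 1/(1-4*t*u) := by field_simp; ring
    simp only [h1]
    field_simp
    exact div_self (ne_of_gt (by linarith))

/-- Supermedian property of `|x|^{-r}` for the Gaussian semigroup, `d ≥ 3`, `0 ≤ r ≤ d-2`:
`∫ g_t(y-x) |y|^{-r} dy ≤ |x|^{-r}` in `[0,∞]`. -/
theorem gaussian_supermedian_power
    (d : ℕ) (hd : 3 ≤ d) (r : ℝ) (hr0 : 0 ≤ r) (hr : r ≤ (d:ℝ) - 2)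
    (t : ℝ) (ht : 0 < t) (x : EuclideanSpace ℝ (Fin d)) :
    (∫⁻ y, ENNReal.ofReal ((4 * Real.pi * t) ^ (-(d:ℝ)/2) * Real.exp (-‖y - x‖^2 / (4*t)))
        * ENNReal.ofReal ‖y‖ ^ (-r))
      ≤ ENNReal.ofReal ‖x‖ ^ (-r) := by
  rcases eq_or_lt_of_le hr0 with hr0' | hrpos
  · -- case r = 0
    subst hr0'
    simp only [neg_zero, ENNReal.rpow_zero, mul_one]
    have h := conv_lintegral d t 0 ht le_rfl x
    simp only [mul_zero, add_zero, zero_div, neg_zero, Real.exp_zero, mul_one, Real.one_rpow,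
      ENNReal.ofReal_one] at h
    exact le_of_eq h
  by_cases hx0 : x = 0
  · subst hx0
    rw [norm_zero, ENNReal.ofReal_zero, ENNReal.zero_rpow_of_neg (by linarith)]
    exact le_top
  have hx : (0:ℝ) < ‖x‖ := norm_pos_iff.mpr hx0
  set p := r/2 with hp_def
  have hp : 0 < p := by rw [hp_def]; linarith
  have hΓ : 0 < Real.Gamma p := Real.Gamma_pos_of_pos hp
  have hc : (0:ℝ) < ‖x‖^2 := by positivity
  have hpow : ∀ z : ℝ, 0 < z → ENNReal.ofReal z ^ (-r) = ENNReal.ofReal ((1/(z^2))^p) := by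
    intro z hz
    rw [ENNReal.ofReal_rpow_of_pos hz]
    congr 1
    have h2 : ((2:ℕ):ℝ) * (-p) = -r := by rw [hp_def]; push_cast; ring
    rw [one_div, Real.inv_rpow (by positivity), ← Real.rpow_neg (by positivity),
      ← Real.rpow_natCast z 2, ← Real.rpow_mul hz.le, h2]
  have hrep : ∀ y : EuclideanSpace ℝ (Fin d), y ≠ 0 →
      ENNReal.ofReal ((4 * Real.pi * t) ^ (-(d:ℝ)/2) * Real.exp (-‖y - x‖^2 / (4*t)))
        * ENNReal.ofReal ‖y‖ ^ (-r)
      = ENNReal.ofReal (1/Real.Gamma p) * ∫⁻ s in Set.Ioi (0:ℝ),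
          ENNReal.ofReal ((4 * Real.pi * t) ^ (-(d:ℝ)/2) * Real.exp (-‖y - x‖^2 / (4*t)))
            * ENNReal.ofReal (s^(p-1) * Real.exp (-(‖y‖^2 * s))) := by
    intro y hy
    have hz : (0:ℝ) < ‖y‖ := norm_pos_iff.mpr hy
    rw [lintegral_const_mul' _ _ ENNReal.ofReal_ne_top,
      gamma_lint p (‖y‖^2) hp (by positivity), hpow ‖y‖ hz,
      show ENNReal.ofReal (1/Real.Gamma p)
          * (ENNReal.ofReal ((4 * Real.pi * t) ^ (-(d:ℝ)/2) * Real.exp (-‖y - x‖^2 / (4*t)))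
            * ENNReal.ofReal ((1/(‖y‖^2))^p * Real.Gamma p))
        = ENNReal.ofReal ((4 * Real.pi * t) ^ (-(d:ℝ)/2) * Real.exp (-‖y - x‖^2 / (4*t)))
            * (ENNReal.ofReal (1/Real.Gamma p) * ENNReal.ofReal ((1/(‖y‖^2))^p * Real.Gamma p))
        from by ring]
    congr 1
    rw [← ENNReal.ofReal_mul (by positivity)]
    congr 1
    field_simp
  haveI : Nontrivial (EuclideanSpace ℝ (Fin d)) := by
    have : Nonempty (Fin d) := ⟨⟨0, by omega⟩⟩
    infer_instance
  have hae : ∀ᵐ y : EuclideanSpace ℝ (Fin d), y ≠ 0 := by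
    rw [ae_iff]
    have hset : {y : EuclideanSpace ℝ (Fin d) | ¬ y ≠ 0} = {0} := by ext y; simp
    rw [hset]
    exact measure_singleton _
  rw [lintegral_congr_ae (hae.mono fun y hy => hrep y hy),
    lintegral_const_mul' _ _ ENNReal.ofReal_ne_top]
  have hmeas : Measurable (Function.uncurry fun (y : EuclideanSpace ℝ (Fin d)) (s : ℝ) =>
      ENNReal.ofReal ((4 * Real.pi * t) ^ (-(d:ℝ)/2) * Real.exp (-‖y - x‖^2 / (4*t)))
        * ENNReal.ofReal (s^(p-1) * Real.exp (-(‖y‖^2 * s)))) := by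
    have h1 : Measurable fun (q : EuclideanSpace ℝ (Fin d) × ℝ) => q.2 ^ (p-1) := by
      measurability
    have h2 : Measurable fun (q : EuclideanSpace ℝ (Fin d) × ℝ) =>
        Real.exp (-‖q.1 - x‖^2/(4*t)) := by fun_prop
    have h3 : Measurable fun (q : EuclideanSpace ℝ (Fin d) × ℝ) =>
        Real.exp (-(‖q.1‖^2 * q.2)) := by fun_prop
    exact ((measurable_const.mul h2).ennreal_ofReal).mul ((h1.mul h3).ennreal_ofReal)
  rw [lintegral_lintegral_swap hmeas.aemeasurable]
  have hinner : ∀ s ∈ Set.Ioi (0:ℝ),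
      (∫⁻ y, ENNReal.ofReal ((4 * Real.pi * t) ^ (-(d:ℝ)/2) * Real.exp (-‖y - x‖^2 / (4*t)))
          * ENNReal.ofReal (s^(p-1) * Real.exp (-(‖y‖^2 * s))))
      = ENNReal.ofReal (s^(p-1)
          * ((1+4*t*s)^(-(d:ℝ)/2) * Real.exp (-(‖x‖^2 * (s/(1+4*t*s)))))) := by
    intro s hs
    have hs' : (0:ℝ) < s := hs
    have h1 : ∀ y : EuclideanSpace ℝ (Fin d),
        ENNReal.ofReal ((4 * Real.pi * t) ^ (-(d:ℝ)/2) * Real.exp (-‖y - x‖^2 / (4*t)))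
          * ENNReal.ofReal (s^(p-1) * Real.exp (-(‖y‖^2 * s)))
        = ENNReal.ofReal (s^(p-1)) * ENNReal.ofReal
            ((4*Real.pi*t)^(-(d:ℝ)/2) * Real.exp (-‖y - x‖^2/(4*t))
              * Real.exp (-(‖y‖^2 * s))) := by
      intro y
      rw [← ENNReal.ofReal_mul (by positivity :
          (0:ℝ) ≤ (4*Real.pi*t)^(-(d:ℝ)/2) * Real.exp (-‖y - x‖^2/(4*t))),
        ← ENNReal.ofReal_mul (Real.rpow_nonneg hs'.le _)]
      congr 1
      ring
    simp_rw [h1]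
    rw [lintegral_const_mul' _ _ ENNReal.ofReal_ne_top, conv_lintegral d t s ht hs'.le x,
      ← ENNReal.ofReal_mul (by positivity)]
  rw [setLIntegral_congr_fun measurableSet_Ioi hinner]
  have hbound : ∀ s ∈ Set.Ioi (0:ℝ),
      ENNReal.ofReal (s^(p-1) * ((1+4*t*s)^(-(d:ℝ)/2) * Real.exp (-(‖x‖^2 * (s/(1+4*t*s))))))
      ≤ ENNReal.ofReal |1/(1+4*t*s)^2|
        * ENNReal.ofReal ((s/(1+4*t*s))^(p-1) * Real.exp (-(‖x‖^2 * (s/(1+4*t*s))))) := by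
    intro s hs
    have hs' : (0:ℝ) < s := hs
    have hK : (0:ℝ) < 1+4*t*s := by positivity
    have hK1 : (1:ℝ) ≤ 1+4*t*s := by nlinarith
    rw [← ENNReal.ofReal_mul (abs_nonneg _)]
    apply ENNReal.ofReal_le_ofReal
    rw [abs_of_pos (by positivity)]
    have e1 : 1/(1+4*t*s)^2 * ((s/(1+4*t*s))^(p-1) * Real.exp (-(‖x‖^2 * (s/(1+4*t*s)))))
        = s^(p-1) * ((1+4*t*s)^(-(2:ℝ) + -(p-1))
            * Real.exp (-(‖x‖^2 * (s/(1+4*t*s))))) := by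
      rw [Real.div_rpow hs'.le hK.le, Real.rpow_add hK, Real.rpow_neg hK.le,
        Real.rpow_neg hK.le,
        show ((1+4*t*s):ℝ)^(2:ℝ) = (1+4*t*s)^2 from by
          rw [← Real.rpow_natCast (1+4*t*s) 2]; norm_num]
      have hKp : (1+4*t*s)^(p-1) ≠ 0 := by positivity
      field_simp
    rw [e1]
    apply mul_le_mul_of_nonneg_left ?_ (by positivity)
    apply mul_le_mul_of_nonneg_right ?_ (Real.exp_nonneg _)
    apply Real.rpow_le_rpow_of_exponent_le hK1
    rw [hp_def]
    have : (3:ℝ) ≤ (d:ℝ) := by exact_mod_cast hd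
    linarith
  calc ENNReal.ofReal (1/Real.Gamma p) * ∫⁻ s in Set.Ioi (0:ℝ),
        ENNReal.ofReal (s^(p-1) * ((1+4*t*s)^(-(d:ℝ)/2)
          * Real.exp (-(‖x‖^2 * (s/(1+4*t*s))))))
      ≤ ENNReal.ofReal (1/Real.Gamma p) * ∫⁻ s in Set.Ioi (0:ℝ),
          ENNReal.ofReal |1/(1+4*t*s)^2|
            * ENNReal.ofReal ((s/(1+4*t*s))^(p-1)
              * Real.exp (-(‖x‖^2 * (s/(1+4*t*s))))) :=
        mul_le_mul_right (setLIntegral_mono' measurableSet_Ioi hbound) _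
    _ = ENNReal.ofReal (1/Real.Gamma p) * ∫⁻ u in (fun s : ℝ => s/(1+4*t*s)) '' Set.Ioi 0,
          ENNReal.ofReal (u^(p-1) * Real.exp (-(‖x‖^2 * u))) := by
        rw [lint_cov measurableSet_Ioi (gmap_deriv ht) (gmap_inj ht)
          (fun u => ENNReal.ofReal (u^(p-1) * Real.exp (-(‖x‖^2 * u))))]
    _ = ENNReal.ofReal (1/Real.Gamma p) * ∫⁻ u in Set.Ioo (0:ℝ) (1/(4*t)),
          ENNReal.ofReal (u^(p-1) * Real.exp (-(‖x‖^2 * u))) := by rw [gmap_image ht]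
    _ ≤ ENNReal.ofReal (1/Real.Gamma p) * ∫⁻ u in Set.Ioi (0:ℝ),
          ENNReal.ofReal (u^(p-1) * Real.exp (-(‖x‖^2 * u))) :=
        mul_le_mul_right (lintegral_mono_set Set.Ioo_subset_Ioi_self) _
    _ = ENNReal.ofReal (1/Real.Gamma p)
          * ENNReal.ofReal ((1/(‖x‖^2))^p * Real.Gamma p) := by
        rw [gamma_lint p (‖x‖^2) hp hc]
    _ = ENNReal.ofReal ((1/(‖x‖^2))^p) := by
        rw [← ENNReal.ofReal_mul (by positivity)]
        congr 1
        field_simp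
    _ = ENNReal.ofReal ‖x‖ ^ (-r) := (hpow ‖x‖ hx).symm
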